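/- arXiv:1302.2442 — 5 statements merged into one kernel-verified Lean document; each statement's English description precedes it below -/
import Mathlib

section
/- Let G : Δop → Set be a functor (a simplicial set) and D a category with products. For a cosimplicial object X in D and a simplicial set K, define (X^K)^n = ∏_{K_n} X^n with the induced cosimplicial structure. If a coaugmentation ε : c(A) → X of a cosimplicial object X admits an extra degeneracy, then ε is a cosimplicial homotopy equivalence, where cosimplicial homotopies are defined via the path object X^{Δ[1]}. -/
open CategoryTheory CategoryTheory.Limits Opposite

universe v u

noncomputable section

variable {D : Type u} [Category.{v} D] [HasProducts.{0} D]

section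
open Simplicial

/-- The coaction of simplicial sets on cosimplicial objects: `(X^K)^n = ∏_{K_n} X^n`. -/
def pow (K : SSet.{0}) (X : CosimplicialObject D) : CosimplicialObject D where
  obj n := ∏ᶜ fun _ : K.obj (op n) => X.obj n
  map {n m} α := Pi.lift fun k => Pi.π _ (K.map α.op k) ≫ X.map α
  map_id n := by
    ext k
    simp [X.map_id]
  map_comp {n m l} α β := by
    ext k
    simp [FunctorToTypes.map_comp_apply, X.map_comp]

lemma const_naturality {m₁ m₂ : SimplexCategoryᵒᵖ} (f : m₁ ⟶ m₂) (n : ℕ) (k : Fin (n + 1)) :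
    Δ[n].map f (SSet.stdSimplex.const n k m₁) = SSet.stdSimplex.const n k m₂ :=
  rfl

/-- Evaluation of the path object `X^{Δ[1]}` at the vertex `i` of `Δ[1]`, i.e. the map
`X^{Δ[1]} ⟶ X` induced by `dⁱ : [0] → [1]`. -/
def ev (i : Fin 2) (X : CosimplicialObject D) : pow Δ[1] X ⟶ X where
  app n := Pi.π (fun _ : (Δ[1] : SSet.{0}).obj (op n) => X.obj n)
      (SSet.stdSimplex.const 1 i (op n))
  naturality n m α := by
    dsimp [pow]
    rw [limit.lift_π]
    rfl

/-- Cosimplicial homotopy of cosimplicial maps, defined via the path object `X^{Δ[1]}`. -/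
def CosimplicialHomotopic {Y X : CosimplicialObject D} (f g : Y ⟶ X) : Prop :=
  ∃ H : Y ⟶ pow Δ[1] X, H ≫ ev 0 X = f ∧ H ≫ ev 1 X = g

/-- An extra degeneracy for a coaugmentation `ε : c(A) ⟶ X` of a cosimplicial object:
maps `s⁻¹ : X⁰ ⟶ A` and `s⁻¹ : X^{n+1} ⟶ X^n` satisfying the cosimplicial identities. -/
structure CoExtraDegeneracy (X : CosimplicialObject D) (A : D)
    (ε : A ⟶ X.obj (SimplexCategory.mk 0)) where
  s' : X.obj (SimplexCategory.mk 0) ⟶ A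
  s : ∀ n : ℕ, X.obj (SimplexCategory.mk (n + 1)) ⟶ X.obj (SimplexCategory.mk n)
  ε_s' : ε ≫ s' = 𝟙 A
  δ₀_s : ∀ n : ℕ, X.δ (0 : Fin (n + 2)) ≫ s n = 𝟙 _
  δ₁_s₀ : X.δ (1 : Fin 2) ≫ s 0 = s' ≫ ε
  δ_s : ∀ (n : ℕ) (i : Fin (n + 2)),
    X.δ i.succ ≫ s (n + 1) = s n ≫ X.δ i
  σ_s : ∀ (n : ℕ) (j : Fin (n + 1)),
    X.σ j.succ ≫ s n = s (n + 1) ≫ X.σ j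
  σ₀_s' : X.σ (0 : Fin 1) ≫ s' = s 0 ≫ s'
  σ₀_s : ∀ n : ℕ, X.σ (0 : Fin (n + 2)) ≫ s n = s (n + 1) ≫ s n

end

namespace ExtraDegAux


/-- number of elements of `Fin a` sent by `f` below `j` -/
def cnt {a b : ℕ} (f : Fin a →o Fin b) (j : ℕ) : ℕ :=
  (Finset.univ.filter fun i => (f i).val < j).card

lemma mem_iff_lt_card {N : ℕ} (s : Finset (Fin N))
    (hs : ∀ u v : Fin N, u ≤ v → v ∈ s → u ∈ s) (x : Fin N) :
    x ∈ s ↔ x.val < s.card := by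
  constructor
  · intro hx
    have h1 : Finset.Iic x ⊆ s := fun u hu => hs u x (Finset.mem_Iic.mp hu) hx
    have h2 := Finset.card_le_card h1
    rw [Fin.card_Iic] at h2
    omega
  · intro hx
    by_contra hxs
    have h1 : s ⊆ Finset.Iio x := by
      intro u hu
      rw [Finset.mem_Iio]
      by_contra hbx
      exact hxs (hs x u (not_lt.mp hbx) hu)
    have h2 := Finset.card_le_card h1
    rw [Fin.card_Iio] at h2
    omega

lemma cnt_lt_iff {a b : ℕ} (f : Fin a →o Fin b) (j : ℕ) (x : Fin a) :
    (f x).val < j ↔ x.val < cnt f j := by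
  have := mem_iff_lt_card (Finset.univ.filter fun i => (f i).val < j)
    (fun u v huv hv => by
      simp only [Finset.mem_filter, Finset.mem_univ, true_and] at hv ⊢
      exact lt_of_le_of_lt (f.monotone huv) hv) x
  simpa [cnt] using this

lemma cnt_le {a b : ℕ} (f : Fin a →o Fin b) (j : ℕ) : cnt f j ≤ a := by
  have := Finset.card_filter_le (Finset.univ : Finset (Fin a)) (fun i => (f i).val < j)
  simpa [cnt] using this

lemma cnt_apply_ge {a b : ℕ} (f : Fin a →o Fin b) (j : ℕ) (x : Fin a)
    (hx : cnt f j ≤ x.val) : j ≤ (f x).val := by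
  by_contra h
  have := (cnt_lt_iff f j x).mp (by omega)
  omega

lemma cnt_top {a b : ℕ} (f : Fin a →o Fin b) (j : ℕ) (hj : b ≤ j) : cnt f j = a := by
  have : (Finset.univ.filter fun i => (f i).val < j) = Finset.univ := by
    apply Finset.filter_true_of_mem
    intro i _
    exact lt_of_lt_of_le (f i).isLt hj
  simp [cnt, this]

lemma cnt_eq_of {a b : ℕ} (f : Fin a →o Fin b) (j c : ℕ) (hc : c ≤ a)
    (h : ∀ x : Fin a, (f x).val < j ↔ x.val < c) : cnt f j = c := by
  have hle := cnt_le f j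
  rcases lt_trichotomy (cnt f j) c with h' | h' | h'
  · have hx : (f ⟨cnt f j, by omega⟩).val < j := (h ⟨cnt f j, by omega⟩).mpr h'
    have h2 : cnt f j < cnt f j := (cnt_lt_iff f j ⟨cnt f j, by omega⟩).mp hx
    omega
  · exact h'
  · have hx : (f ⟨c, by omega⟩).val < j :=
      (cnt_lt_iff f j ⟨c, by omega⟩).mpr (show c < cnt f j from h')
    have h2 : c < c := (h ⟨c, by omega⟩).mp hx
    omega

lemma cnt_comp {a b c : ℕ} (f : Fin a →o Fin b) (g : Fin b →o Fin c) (j : ℕ) :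
    cnt (g.comp f) j = cnt f (cnt g j) := by
  apply cnt_eq_of
  · exact cnt_le f _
  · intro x
    rw [← cnt_lt_iff f (cnt g j) x]
    exact cnt_lt_iff g j (f x)

/-- truncation of a monotone map: remove the `j` lowest target values and the
`cnt f j` source values mapping to them. -/
def trunc {a b : ℕ} (f : Fin (a+1) →o Fin (b+1)) (j k' k : ℕ)
    (h1 : k' + cnt f j = a+1) (h2 : k + j = b+1) : Fin k' →o Fin k where
  toFun i := ⟨(f ⟨i.val + cnt f j, by omega⟩).val - j, by
    have hge : j ≤ (f ⟨i.val + cnt f j, by omega⟩).val :=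
      cnt_apply_ge f j _ (by simp)
    have hlt := (f ⟨i.val + cnt f j, by omega⟩).isLt
    omega⟩
  monotone' := by
    intro i i' hii
    have : (⟨i.val + cnt f j, by omega⟩ : Fin (a+1)) ≤ ⟨i'.val + cnt f j, by omega⟩ := by
      simp only [Fin.mk_le_mk]
      have := (Fin.le_def.mp hii)
      omega
    have := Fin.le_def.mp (f.monotone this)
    simp only [Fin.mk_le_mk]
    omega

lemma trunc_val {a b : ℕ} (f : Fin (a+1) →o Fin (b+1)) (j k' k : ℕ)
    (h1 : k' + cnt f j = a+1) (h2 : k + j = b+1) (i : Fin k') :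
    (trunc f j k' k h1 h2 i).val = (f ⟨i.val + cnt f j, by omega⟩).val - j := rfl

/-- the shift-by-`j` inclusion -/
def shiftO (j k m : ℕ) (h : k + j = m) : Fin k →o Fin m where
  toFun i := ⟨i.val + j, by omega⟩
  monotone' := by
    intro i i' hii
    simp only [Fin.mk_le_mk]
    have := Fin.le_def.mp hii
    omega

/-- value formula for `σ` -/
lemma σ_val {n : ℕ} (i : Fin (n+1)) (x : Fin (n+2)) :
    ((SimplexCategory.σ i).toOrderHom x).val
      = if x.val ≤ i.val then x.val else x.val - 1 := by
  change (Fin.predAbove i x).val = _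
  unfold Fin.predAbove
  split_ifs with h₁ h₂ h₂
  · rw [Fin.lt_def, Fin.coe_castSucc] at h₁; omega
  · rw [Fin.coe_pred]
  · rw [Fin.coe_castPred]
  · rw [Fin.lt_def, Fin.coe_castSucc, not_lt] at h₁
    rw [not_le] at h₂; omega

/-- value formula for `δ` -/
lemma δ_val {n : ℕ} (c : Fin (n+2)) (x : Fin (n+1)) :
    ((SimplexCategory.δ c).toOrderHom x).val
      = if x.val < c.val then x.val else x.val + 1 := by
  change (Fin.succAbove c x).val = _
  unfold Fin.succAbove
  split_ifs with h₁ h₂ h₂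
  · rw [Fin.coe_castSucc]
  · rw [Fin.lt_def, Fin.coe_castSucc] at h₁; omega
  · rw [Fin.lt_def, Fin.coe_castSucc, not_lt] at h₁; omega
  · rw [Fin.val_succ]


lemma ordext {α β : ℕ} {f g : Fin α →o Fin β} (h : ∀ x, (f x).val = (g x).val) : f = g :=
  OrderHom.ext _ _ (funext fun x => Fin.ext (h x))

lemma shiftO_val (j k m : ℕ) (h : k + j = m) (x : Fin k) :
    (shiftO j k m h x).val = x.val + j := rfl

/-- the key value formula for `trunc` -/
lemma trunc_val' {a b : ℕ} (f : Fin (a+1) →o Fin (b+1)) (j k' k : ℕ)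
    (h1 : k' + cnt f j = a+1) (h2 : k + j = b+1) (x : Fin k') :
    (trunc f j k' k h1 h2 x).val + j = (f (shiftO (cnt f j) k' (a+1) h1 x)).val := by
  have hge : cnt f j ≤ (shiftO (cnt f j) k' (a+1) h1 x).val := by
    rw [shiftO_val]; omega
  have hj : j ≤ (f (shiftO (cnt f j) k' (a+1) h1 x)).val := cnt_apply_ge f j _ hge
  have he : (trunc f j k' k h1 h2 x).val
      = (f ⟨x.val + cnt f j, by omega⟩).val - j := rfl
  rw [show (⟨x.val + cnt f j, by omega⟩ : Fin (a+1))
      = shiftO (cnt f j) k' (a+1) h1 x from Fin.ext rfl] at he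
  omega

/-- the face order-embedding, with arbitrary (possibly empty) source -/
def dO (p : ℕ) (c : Fin (p+1)) : Fin p →o Fin (p+1) where
  toFun x := ⟨if x.val < c.val then x.val else x.val + 1, by
    split_ifs with h
    · omega
    · have := x.isLt; omega⟩
  monotone' := by
    intro u v huv
    have := Fin.le_def.mp huv
    simp only [Fin.mk_le_mk]
    split_ifs <;> omega

lemma dO_val (p : ℕ) (c : Fin (p+1)) (x : Fin p) :
    (dO p c x).val = if x.val < c.val then x.val else x.val + 1 := rfl

lemma cnt_σ {n : ℕ} (i : Fin (n+1)) (m : ℕ) (hm : m ≤ n+1) :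
    cnt (SimplexCategory.σ i).toOrderHom m = if i.val < m then m + 1 else m := by
  split_ifs with hi
  · apply cnt_eq_of _ _ _ (by simp only [SimplexCategory.len_mk]; omega)
    intro x
    rw [σ_val]
    split_ifs with h <;> omega
  · apply cnt_eq_of _ _ _ (by simp only [SimplexCategory.len_mk]; omega)
    intro x
    rw [σ_val]
    split_ifs with h <;> omega

lemma cnt_δ {n : ℕ} (c : Fin (n+2)) (m : ℕ) (hm : m ≤ n+2) :
    cnt (SimplexCategory.δ c).toOrderHom m = if c.val < m then m - 1 else m := by
  split_ifs with hi
  · apply cnt_eq_of _ _ _ (by simp only [SimplexCategory.len_mk]; omega)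
    intro x
    rw [δ_val]
    split_ifs with h <;> omega
  · apply cnt_eq_of _ _ _ (by
      have := c.isLt; simp only [SimplexCategory.len_mk]; omega)
    intro x
    rw [δ_val]
    split_ifs with h <;> omega


section

variable (X : CosimplicialObject D) (A : D)
  (εc : (Functor.const SimplexCategory).obj A ⟶ X)
  (ed : CoExtraDegeneracy X A (εc.app (SimplexCategory.mk 0)))

set_option linter.unusedSectionVars false
set_option linter.unusedVariables false

/-- Augmented levels: `B 0 = A`, `B (k+1) = Xᵏ`. -/
@[reducible] def B : ℕ → D
  | 0 => A
  | k+1 => X.obj (SimplexCategory.mk k)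

/-- The extra degeneracies, uniformly. -/
def ss : ∀ k : ℕ, B X A (k+1) ⟶ B X A k
  | 0 => ed.s'
  | k+1 => ed.s k

/-- The 0th coface, uniformly (with `ε` at the bottom). -/
def Dδ : ∀ (p : ℕ), Fin (p+1) → (B X A p ⟶ B X A (p+1))
  | 0, _ => εc.app (SimplexCategory.mk 0)
  | p+1, a => X.δ a

/-- codegeneracies, retyped on `B` levels -/
def Dσ (n : ℕ) (a : Fin (n+1)) : B X A (n+2) ⟶ B X A (n+1) := X.σ a

/-- Iterated extra degeneracies `B p ⟶ B q`, `q + j = p`. -/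
def SS : ∀ (j p q : ℕ), q + j = p → (B X A p ⟶ B X A q)
  | 0, p, q, h => eqToHom (by subst h; rfl)
  | _+1, 0, q, h => absurd h (by omega)
  | j+1, p+1, q, h => ss X A εc ed p ≫ SS j p q (by omega)

lemma SS_zero' (p : ℕ) (h : p + 0 = p) : SS X A εc ed 0 p p h = 𝟙 _ :=
  eqToHom_refl _ _

lemma SS_succ (j p q : ℕ) (h : q + (j+1) = p+1) (h' : q + j = p) :
    SS X A εc ed (j+1) (p+1) q h = ss X A εc ed p ≫ SS X A εc ed j p q h' :=
  rfl

lemma SS_congr (j j' p q : ℕ) (e : j = j') (h : q + j = p) (h' : q + j' = p) :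
    SS X A εc ed j p q h = SS X A εc ed j' p q h' := by
  subst e; rfl

/-- `dd ≫ ss = id` -/
lemma dd_ss (p : ℕ) : Dδ X A εc p 0 ≫ ss X A εc ed p = 𝟙 _ := by
  cases p with
  | zero => exact ed.ε_s'
  | succ q => exact ed.δ₀_s q

/-- `δ_{a+1} ≫ s = s ≫ δ_a` -/
lemma dδ_ss (p : ℕ) (a : Fin (p+1)) :
    Dδ X A εc (p+1) a.succ ≫ ss X A εc ed (p+1) = ss X A εc ed p ≫ Dδ X A εc p a := by
  cases p with
  | zero =>
    have ha : a = 0 := Fin.ext (by have := a.isLt; omega)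
    subst ha
    exact ed.δ₁_s₀
  | succ q => exact ed.δ_s q a

/-- `σ_0 ≫ s = s ≫ s` -/
lemma σ_ss0 (p : ℕ) :
    Dσ X A p 0 ≫ ss X A εc ed p = ss X A εc ed (p+1) ≫ ss X A εc ed p := by
  cases p with
  | zero => exact ed.σ₀_s'
  | succ q => exact ed.σ₀_s q

/-- `σ_{a+1} ≫ s = s ≫ σ_a` -/
lemma σ_ss (p : ℕ) (a : Fin (p+1)) :
    Dσ X A (p+1) a.succ ≫ ss X A εc ed (p+1) = ss X A εc ed (p+2) ≫ Dσ X A p a :=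
  ed.σ_s p a

/-- commuting a coface past iterated extra degeneracies, absorbed case -/
lemma SS_dδ_lt : ∀ (j p k : ℕ) (a : Fin (p+1)), a.val ≤ j →
    ∀ (h : k + (j+1) = p+1) (h' : k + j = p),
    Dδ X A εc p a ≫ SS X A εc ed (j+1) (p+1) k h = SS X A εc ed j p k h'
  | 0, p, k, a, ha, h, h' => by
    have hz : a = 0 := Fin.ext (by simp only [Fin.val_zero]; omega)
    subst hz
    rw [SS_succ X A εc ed 0 p k h h', ← Category.assoc, dd_ss, Category.id_comp]
  | j+1, 0, k, a, ha, h, h' => absurd h (by omega)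
  | j+1, p+1, k, a, ha, h, h' => by
    rw [SS_succ X A εc ed (j+1) (p+1) k h (by omega)]
    cases a using Fin.cases with
    | zero => rw [← Category.assoc, dd_ss, Category.id_comp]
    | succ a' =>
      rw [← Category.assoc, dδ_ss, Category.assoc,
        SS_dδ_lt j p k a' (by rw [Fin.val_succ] at ha; omega) (by omega) (by omega),
        SS_succ X A εc ed j p k h' (by omega)]

/-- commuting a coface past iterated extra degeneracies, free case -/
lemma SS_dδ_ge : ∀ (j : ℕ) {p k' : ℕ} (hp : k' + j = p) (b : Fin (k'+1))
    (a : Fin (p+1)) (hab : a.val = b.val + j) (h : (k'+1) + j = p+1),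
    Dδ X A εc p a ≫ SS X A εc ed j (p+1) (k'+1) h
      = SS X A εc ed j p k' hp ≫ Dδ X A εc k' b
  | 0, p, k', hp, b, a, hab, h => by
    have hkp : k' = p := by omega
    subst hkp
    have hba : a = b := Fin.ext (by omega)
    subst hba
    rw [SS_zero' X A εc ed _ _, SS_zero' X A εc ed _ _, Category.id_comp, Category.comp_id]
  | j+1, p, k', hp, b, a, hab, h => by
    have hp' : p = (k'+j)+1 := by omega
    subst hp'
    have hbj : b.val + j < k' + j + 1 := by have := b.isLt; omega
    rw [show a = (⟨b.val + j, hbj⟩ : Fin (k'+j+1)).succ from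
      Fin.ext (by rw [Fin.val_succ]; exact hab)]
    rw [SS_succ X A εc ed j (k'+j+1) (k'+1) h (by omega), ← Category.assoc, dδ_ss,
      Category.assoc,
      SS_dδ_ge j (by omega) b ⟨b.val + j, hbj⟩ rfl (by omega),
      SS_succ X A εc ed j (k'+j) k' hp (by omega), Category.assoc]

/-- commuting a codegeneracy past iterated extra degeneracies, absorbing case -/
lemma SS_σ_lt : ∀ (j : ℕ) {p k : ℕ} (a : Fin (p+1)), a.val < j →
    ∀ (h : k + j = p+1) (h' : k + (j+1) = p+2),
    Dσ X A p a ≫ SS X A εc ed j (p+1) k h = SS X A εc ed (j+1) (p+2) k h'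
  | 0, p, k, a, ha, h, h' => absurd ha (by omega)
  | j+1, p, k, a, ha, h, h' => by
    rw [SS_succ X A εc ed j p k h (by omega)]
    cases a using Fin.cases with
    | zero =>
      rw [← Category.assoc, σ_ss0, Category.assoc,
        SS_succ X A εc ed (j+1) (p+1) k h' (by omega),
        SS_succ X A εc ed j p k (by omega) (by omega)]
    | succ a' =>
      obtain ⟨p', rfl⟩ : ∃ p', p = p'+1 := ⟨p - 1, by have := a'.isLt; omega⟩
      rw [← Category.assoc, σ_ss, Category.assoc,
        SS_σ_lt j a' (by rw [Fin.val_succ] at ha; omega) (by omega) (by omega),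
        SS_succ X A εc ed (j+1) (p'+2) k h' (by omega)]

/-- commuting a codegeneracy past iterated extra degeneracies, free case -/
lemma SS_σ_ge : ∀ (j : ℕ) {p k' : ℕ} (hp : k' + j = p) (b : Fin (k'+1))
    (a : Fin (p+1)) (hab : a.val = b.val + j)
    (h : (k'+1) + j = p+1) (h₂ : (k'+2) + j = p+2),
    Dσ X A p a ≫ SS X A εc ed j (p+1) (k'+1) h
      = SS X A εc ed j (p+2) (k'+2) h₂ ≫ Dσ X A k' b
  | 0, p, k', hp, b, a, hab, h, h₂ => by
    have hkp : k' = p := by omega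
    subst hkp
    have hba : a = b := Fin.ext (by omega)
    subst hba
    rw [SS_zero' X A εc ed _ _, SS_zero' X A εc ed _ _, Category.id_comp, Category.comp_id]
  | j+1, p, k', hp, b, a, hab, h, h₂ => by
    have hp' : p = (k'+j)+1 := by omega
    subst hp'
    have hbj : b.val + j < k' + j + 1 := by have := b.isLt; omega
    rw [show a = (⟨b.val + j, hbj⟩ : Fin (k'+j+1)).succ from
      Fin.ext (by rw [Fin.val_succ]; exact hab)]
    rw [SS_succ X A εc ed j (k'+j+1) (k'+1) h (by omega), ← Category.assoc, σ_ss,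
      Category.assoc,
      SS_σ_ge j (by omega) b ⟨b.val + j, hbj⟩ rfl (by omega) (by omega),
      SS_succ X A εc ed j (k'+j+2) (k'+2) h₂ (by omega), Category.assoc]


/-- realization of augmented monotone maps on `B` levels -/
def Bfun : ∀ {a b : ℕ}, (Fin a →o Fin b) → (B X A a ⟶ B X A b)
  | 0, 0, _ => 𝟙 _
  | 0, b+1, _ => εc.app (SimplexCategory.mk b)
  | _+1, 0, f => (f 0).elim0
  | a+1, b+1, f => X.map (SimplexCategory.mkHom f)

lemma εc_nat {n m : SimplexCategory} (f : n ⟶ m) : εc.app n ≫ X.map f = εc.app m := by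
  have h := εc.naturality f
  simp only [Functor.const_obj_obj, Functor.const_obj_map, Category.id_comp] at h
  exact h.symm

lemma Bfun_id : ∀ (a : ℕ), Bfun X A εc (OrderHom.id : Fin a →o Fin a) = 𝟙 _
  | 0 => rfl
  | a+1 => by
    show X.map (SimplexCategory.mkHom OrderHom.id) = _
    have : SimplexCategory.mkHom (OrderHom.id : Fin (a+1) →o Fin (a+1)) = 𝟙 _ := rfl
    rw [this, X.map_id]

lemma Bfun_comp : ∀ {a b c : ℕ} (f : Fin a →o Fin b) (g : Fin b →o Fin c),
    Bfun X A εc f ≫ Bfun X A εc g = Bfun X A εc (g.comp f)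
  | 0, 0, 0, f, g => by simp [Bfun]
  | 0, 0, c+1, f, g => by simp [Bfun]
  | 0, b+1, 0, f, g => (g 0).elim0
  | 0, b+1, c+1, f, g => by
    show εc.app (SimplexCategory.mk b) ≫ X.map (SimplexCategory.mkHom g)
        = εc.app (SimplexCategory.mk c)
    exact εc_nat X A εc _
  | a+1, 0, _, f, g => (f 0).elim0
  | a+1, b+1, 0, f, g => (g 0).elim0
  | a+1, b+1, c+1, f, g => by
    show X.map _ ≫ X.map _ = X.map _
    rw [← X.map_comp]
    rfl

lemma Bfun_toOrderHom {a b : ℕ} (φ : ((SimplexCategory.mk a) : SimplexCategory) ⟶ (SimplexCategory.mk b)) :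
    Bfun X A εc φ.toOrderHom = X.map φ := by
  show X.map (SimplexCategory.mkHom φ.toOrderHom) = X.map φ
  rw [show SimplexCategory.mkHom φ.toOrderHom = φ from SimplexCategory.Hom.mk_toOrderHom φ]

lemma Bfun_congr {a b : ℕ} (f g : Fin a →o Fin b) (e : f = g) :
    Bfun X A εc f = Bfun X A εc g := by rw [e]


/-- normalized underlying order hom -/
def OH {a b : ℕ} (φ : ((SimplexCategory.mk a) : SimplexCategory) ⟶ (SimplexCategory.mk b)) : Fin (a+1) →o Fin (b+1) :=
  φ.toOrderHom

lemma OH_comp {a b c : ℕ} (f : ((SimplexCategory.mk a) : SimplexCategory) ⟶ (SimplexCategory.mk b)) (g : ((SimplexCategory.mk b) : SimplexCategory) ⟶ (SimplexCategory.mk c)) :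
    OH (f ≫ g) = (OH g).comp (OH f) :=
  SimplexCategory.comp_toOrderHom f g

lemma σ_val' {n : ℕ} (i : Fin (n+1)) (x : Fin (n+2)) :
    ((OH (SimplexCategory.σ i)) x).val = if x.val ≤ i.val then x.val else x.val - 1 :=
  σ_val i x

lemma δ_val' {n : ℕ} (c : Fin (n+2)) (x : Fin (n+1)) :
    ((OH (SimplexCategory.δ c)) x).val = if x.val < c.val then x.val else x.val + 1 :=
  δ_val c x

lemma cnt_σ' {n : ℕ} (i : Fin (n+1)) (m : ℕ) (hm : m ≤ n+1) :
    cnt (OH (SimplexCategory.σ i)) m = if i.val < m then m + 1 else m :=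
  cnt_σ i m hm

lemma cnt_δ' {n : ℕ} (c : Fin (n+2)) (m : ℕ) (hm : m ≤ n+2) :
    cnt (OH (SimplexCategory.δ c)) m = if c.val < m then m - 1 else m :=
  cnt_δ c m hm

lemma OH_id_val (a : ℕ) (x : Fin (a+1)) : ((OH (𝟙 ((SimplexCategory.mk a) : SimplexCategory))) x).val = x.val := by
  show ((SimplexCategory.Hom.toOrderHom (𝟙 ((SimplexCategory.mk a) : SimplexCategory))) x).val = x.val
  rw [SimplexCategory.id_toOrderHom]
  rfl

lemma Bfun_OH {a b : ℕ} (φ : ((SimplexCategory.mk a) : SimplexCategory) ⟶ (SimplexCategory.mk b)) :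
    Bfun X A εc (OH φ) = X.map φ :=
  Bfun_toOrderHom X A εc φ

lemma Dδ_eq_Bfun : ∀ (p : ℕ) (c : Fin (p+1)), Dδ X A εc p c = Bfun X A εc (dO p c)
  | 0, c => rfl
  | p+1, c => by
    rw [show Dδ X A εc (p+1) c = X.map (SimplexCategory.δ c) from rfl, ← Bfun_OH X A εc]
    apply Bfun_congr
    apply ordext
    intro x
    rw [δ_val', dO_val]

lemma main_id (a : ℕ) (j k k' : ℕ) (h : k + j = a + 1)
    (h1 : k' + cnt (OH (𝟙 ((SimplexCategory.mk a) : SimplexCategory))) j = a + 1) :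
    X.map (𝟙 ((SimplexCategory.mk a) : SimplexCategory)) ≫ SS X A εc ed j (a+1) k h
      = SS X A εc ed (cnt (OH (𝟙 ((SimplexCategory.mk a) : SimplexCategory))) j) (a+1) k' h1
          ≫ Bfun X A εc (trunc (OH (𝟙 ((SimplexCategory.mk a) : SimplexCategory))) j k' k h1 h) := by
  have hc : cnt (OH (𝟙 ((SimplexCategory.mk a) : SimplexCategory))) j = j := by
    apply cnt_eq_of _ _ _ (by omega)
    intro x
    rw [OH_id_val]
  have hk : k' = k := by omega
  subst hk
  rw [X.map_id, Category.id_comp,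
    SS_congr X A εc ed _ j (a+1) k' hc h1 (by omega)]
  have ht : trunc (OH (𝟙 ((SimplexCategory.mk a) : SimplexCategory))) j k' k' h1 h = OrderHom.id := by
    apply ordext
    intro x
    have h2 := trunc_val' (OH (𝟙 ((SimplexCategory.mk a) : SimplexCategory))) j k' k' h1 h x
    rw [OH_id_val, shiftO_val] at h2
    show _ = x.val
    omega
  rw [ht, Bfun_id, Category.comp_id]

theorem main : ∀ (N : ℕ) {a b : ℕ}, a + b ≤ N → ∀ (φ : ((SimplexCategory.mk a) : SimplexCategory) ⟶ (SimplexCategory.mk b))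
    (j k k' : ℕ) (h : k + j = b + 1) (h1 : k' + cnt (OH φ) j = a + 1),
    X.map φ ≫ SS X A εc ed j (b+1) k h
      = SS X A εc ed (cnt (OH φ) j) (a+1) k' h1
          ≫ Bfun X A εc (trunc (OH φ) j k' k h1 h) := by
  intro N
  induction N with
  | zero =>
    intro a b hN φ j k k' h h1
    obtain rfl : a = 0 := by omega
    obtain rfl : b = 0 := by omega
    obtain rfl : φ = 𝟙 _ := SimplexCategory.hom_zero_zero φ
    exact main_id X A εc ed 0 j k k' h h1
  | succ N IH =>
    intro a b hN φ j k k' h h1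
    by_cases hinj : Function.Injective (OH φ)
    · by_cases hsurj : Function.Surjective (OH φ)
      · obtain rfl : a = b := by
          have hcard := Fintype.card_of_bijective ⟨hinj, hsurj⟩
          simp only [Fintype.card_fin] at hcard
          omega
        obtain rfl : φ = 𝟙 _ := by
          have : IsIso φ := SimplexCategory.isIso_of_bijective ⟨hinj, hsurj⟩
          exact SimplexCategory.eq_id_of_isIso φ
        exact main_id X A εc ed a j k k' h h1
      · -- δ case : φ = φ' ≫ δ i
        obtain ⟨b', rfl⟩ : ∃ b', b = b' + 1 := by
          cases b with
          | zero =>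
            exfalso
            apply hsurj
            intro y
            refine ⟨0, Fin.ext ?_⟩
            have h1' := ((OH φ) 0).isLt
            have h2' := y.isLt
            omega
          | succ b' => exact ⟨b', rfl⟩
        obtain ⟨i, φ', rfl⟩ := SimplexCategory.eq_comp_δ_of_not_surjective φ hsurj
        have hcomp : OH (φ' ≫ SimplexCategory.δ i)
            = (OH (SimplexCategory.δ i)).comp (OH φ') := OH_comp _ _
        have happ : ∀ u : Fin (a+1), ((OH (φ' ≫ SimplexCategory.δ i)) u).val
            = ((OH (SimplexCategory.δ i)) ((OH φ') u)).val := by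
          intro u; rw [hcomp]; rfl
        have hcnt : cnt (OH (φ' ≫ SimplexCategory.δ i)) j
            = cnt (OH φ') (cnt (OH (SimplexCategory.δ i)) j) := by
          rw [hcomp, cnt_comp]
        by_cases hij : i.val < j
        · -- absorbed face
          obtain ⟨j'', rfl⟩ : ∃ j'', j = j'' + 1 := ⟨j - 1, by omega⟩
          have hcδ : cnt (OH (SimplexCategory.δ i)) (j''+1) = j'' := by
            rw [cnt_δ' i _ (by omega), if_pos hij]
            omega
          have hc2 : cnt (OH (φ' ≫ SimplexCategory.δ i)) (j''+1)
              = cnt (OH φ') j'' := by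
            rw [hcnt, hcδ]
          have pf1 : k' + cnt (OH φ') j'' = a + 1 := by omega
          have pf2 : k + j'' = b' + 1 := by omega
          rw [X.map_comp, Category.assoc,
            show X.map (SimplexCategory.δ i) = Dδ X A εc (b'+1) i from rfl,
            SS_dδ_lt X A εc ed j'' (b'+1) k i (by omega) h pf2,
            IH (by omega) φ' j'' k k' pf2 pf1,
            SS_congr X A εc ed (cnt (OH (φ' ≫ SimplexCategory.δ i)) (j''+1))
              (cnt (OH φ') j'') (a+1) k' hc2 h1 pf1]
          have htr : trunc (OH (φ' ≫ SimplexCategory.δ i)) (j''+1) k' k h1 h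
              = trunc (OH φ') j'' k' k pf1 pf2 := by
            apply ordext; intro x
            have e1 := trunc_val' (OH (φ' ≫ SimplexCategory.δ i)) (j''+1) k' k h1 h x
            have e2 := trunc_val' (OH φ') j'' k' k pf1 pf2 x
            rw [happ] at e1
            rw [show (shiftO (cnt (OH (φ' ≫ SimplexCategory.δ i)) (j''+1)) k' (a+1) h1 x)
                = (shiftO (cnt (OH φ') j'') k' (a+1) pf1 x) from
              Fin.ext (by rw [shiftO_val, shiftO_val, hc2])] at e1
            rw [δ_val'] at e1
            have hge : j'' ≤ ((OH φ') (shiftO (cnt (OH φ') j'') k' (a+1) pf1 x)).val := by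
              apply cnt_apply_ge
              rw [shiftO_val]; omega
            split_ifs at e1 <;> omega
          rw [htr]
        · -- free face
          have hcδ : cnt (OH (SimplexCategory.δ i)) j = j := by
            rw [cnt_δ' i _ (by omega), if_neg hij]
          have hc2 : cnt (OH (φ' ≫ SimplexCategory.δ i)) j = cnt (OH φ') j := by
            rw [hcnt, hcδ]
          obtain ⟨k₂, rfl⟩ : ∃ k₂, k = k₂ + 1 :=
            ⟨k - 1, by have := i.isLt; omega⟩
          obtain ⟨b₂, hb₂⟩ : ∃ b₂ : Fin (k₂+1), b₂.val = i.val - j :=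
            ⟨⟨i.val - j, by have := i.isLt; omega⟩, rfl⟩
          have pf1 : k' + cnt (OH φ') j = a + 1 := by omega
          have pf2 : k₂ + j = b' + 1 := by omega
          rw [X.map_comp, Category.assoc,
            show X.map (SimplexCategory.δ i) = Dδ X A εc (b'+1) i from rfl,
            SS_dδ_ge X A εc ed j pf2 b₂ i (by omega) h,
            ← Category.assoc,
            IH (by omega) φ' j k₂ k' pf2 pf1,
            Category.assoc,
            Dδ_eq_Bfun X A εc k₂ b₂,
            Bfun_comp X A εc _ _,
            SS_congr X A εc ed (cnt (OH (φ' ≫ SimplexCategory.δ i)) j)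
              (cnt (OH φ') j) (a+1) k' hc2 h1 pf1]
          have htr : (dO k₂ b₂).comp (trunc (OH φ') j k' k₂ pf1 pf2)
              = trunc (OH (φ' ≫ SimplexCategory.δ i)) j k' (k₂+1) h1 h := by
            apply ordext; intro x
            have e1 := trunc_val' (OH (φ' ≫ SimplexCategory.δ i)) j k' (k₂+1) h1 h x
            have e2 := trunc_val' (OH φ') j k' k₂ pf1 pf2 x
            rw [happ] at e1
            rw [show (shiftO (cnt (OH (φ' ≫ SimplexCategory.δ i)) j) k' (a+1) h1 x)
                = (shiftO (cnt (OH φ') j) k' (a+1) pf1 x) from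
              Fin.ext (by rw [shiftO_val, shiftO_val, hc2])] at e1
            rw [δ_val'] at e1
            have hge : j ≤ ((OH φ') (shiftO (cnt (OH φ') j) k' (a+1) pf1 x)).val := by
              apply cnt_apply_ge
              rw [shiftO_val]; omega
            show (dO k₂ b₂ (trunc (OH φ') j k' k₂ pf1 pf2 x)).val = _
            rw [dO_val]
            split_ifs at e1 ⊢ <;> omega
          rw [htr]
    · -- σ case : φ = σ i ≫ φ'
      obtain ⟨a', rfl⟩ : ∃ a', a = a' + 1 := by
        cases a with
        | zero =>
          exfalso
          apply hinj
          intro x y _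
          apply Fin.ext
          have h1' := x.isLt
          have h2' := y.isLt
          omega
        | succ a' => exact ⟨a', rfl⟩
      obtain ⟨i, φ', rfl⟩ := SimplexCategory.eq_σ_comp_of_not_injective φ hinj
      have hcomp : OH (SimplexCategory.σ i ≫ φ')
          = (OH φ').comp (OH (SimplexCategory.σ i)) := OH_comp _ _
      have happ : ∀ u : Fin (a'+2), ((OH (SimplexCategory.σ i ≫ φ')) u).val
          = ((OH φ') ((OH (SimplexCategory.σ i)) u)).val := by
        intro u; rw [hcomp]; rfl
      have hcnt : cnt (OH (SimplexCategory.σ i ≫ φ')) j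
          = cnt (OH (SimplexCategory.σ i)) (cnt (OH φ') j) := by
        rw [hcomp, cnt_comp]
      have hj₁ : cnt (OH φ') j ≤ a' + 1 := cnt_le (OH φ') j
      by_cases hij : i.val < cnt (OH φ') j
      · have hcσ : cnt (OH (SimplexCategory.σ i ≫ φ')) j = cnt (OH φ') j + 1 := by
          rw [hcnt, cnt_σ' i _ hj₁, if_pos hij]
        have hk₁ : k' + cnt (OH φ') j = a' + 1 := by omega
        rw [X.map_comp, Category.assoc,
          IH (by omega) φ' j k k' h hk₁,
          ← Category.assoc,
          show X.map (SimplexCategory.σ i) = Dσ X A a' i from rfl,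
          SS_σ_lt X A εc ed (cnt (OH φ') j) i hij hk₁ (by omega),
          SS_congr X A εc ed (cnt (OH (SimplexCategory.σ i ≫ φ')) j)
            (cnt (OH φ') j + 1) (a'+2) k' hcσ h1 (by omega)]
        have htr : trunc (OH (SimplexCategory.σ i ≫ φ')) j k' k h1 h
            = trunc (OH φ') j k' k hk₁ h := by
          apply ordext; intro x
          have e1 := trunc_val' (OH (SimplexCategory.σ i ≫ φ')) j k' k h1 h x
          have e2 := trunc_val' (OH φ') j k' k hk₁ h x
          rw [happ] at e1
          rw [show (OH (SimplexCategory.σ i))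
                (shiftO (cnt (OH (SimplexCategory.σ i ≫ φ')) j) k' (a'+2) h1 x)
              = shiftO (cnt (OH φ') j) k' (a'+1) hk₁ x from by
            apply Fin.ext
            rw [σ_val', shiftO_val, shiftO_val, hcσ, if_neg (by omega)]
            omega] at e1
          omega
        rw [htr]
      · have hcσ : cnt (OH (SimplexCategory.σ i ≫ φ')) j = cnt (OH φ') j := by
          rw [hcnt, cnt_σ' i _ hj₁, if_neg hij]
        obtain ⟨k₂, hk₂⟩ : ∃ k₂, (k₂ + 1) + cnt (OH φ') j = a' + 1 :=
          ⟨a' - cnt (OH φ') j, by have := i.isLt; omega⟩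
        obtain rfl : k' = k₂ + 2 := by omega
        obtain ⟨b₂, hb₂⟩ : ∃ b₂ : Fin (k₂+1), b₂.val = i.val - cnt (OH φ') j :=
          ⟨⟨i.val - cnt (OH φ') j, by have := i.isLt; omega⟩, rfl⟩
        rw [X.map_comp, Category.assoc,
          IH (by omega) φ' j k (k₂+1) h hk₂,
          ← Category.assoc,
          show X.map (SimplexCategory.σ i) = Dσ X A a' i from rfl,
          SS_σ_ge X A εc ed (cnt (OH φ') j) (by omega) b₂ i (by omega) hk₂ (by omega),
          Category.assoc,
          show Dσ X A k₂ b₂ = Bfun X A εc (OH (SimplexCategory.σ b₂)) from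
            (Bfun_OH X A εc _).symm,
          Bfun_comp X A εc _ _,
          SS_congr X A εc ed (cnt (OH (SimplexCategory.σ i ≫ φ')) j)
            (cnt (OH φ') j) (a'+2) (k₂+2) hcσ h1 (by omega)]
        have htr : (trunc (OH φ') j (k₂+1) k hk₂ h).comp (OH (SimplexCategory.σ b₂))
            = trunc (OH (SimplexCategory.σ i ≫ φ')) j (k₂+2) k h1 h := by
          apply ordext; intro x
          show (trunc (OH φ') j (k₂+1) k hk₂ h ((OH (SimplexCategory.σ b₂)) x)).val = _
          have e1 := trunc_val' (OH (SimplexCategory.σ i ≫ φ')) j (k₂+2) k h1 h x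
          have e2 := trunc_val' (OH φ') j (k₂+1) k hk₂ h ((OH (SimplexCategory.σ b₂)) x)
          rw [happ] at e1
          rw [show (OH (SimplexCategory.σ i))
                (shiftO (cnt (OH (SimplexCategory.σ i ≫ φ')) j) (k₂+2) (a'+2) h1 x)
              = shiftO (cnt (OH φ') j) (k₂+1) (a'+1) hk₂
                  ((OH (SimplexCategory.σ b₂)) x) from by
            apply Fin.ext
            rw [σ_val', shiftO_val, shiftO_val, σ_val', hcσ]
            split_ifs <;> omega] at e1
          omega
        rw [htr]


lemma Bfun_zero (f : Fin 0 →o Fin 0) : Bfun X A εc f = 𝟙 (B X A 0) := rfl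

lemma εc_SS : ∀ (n : ℕ) (hn : 0 + (n+1) = n+1),
    εc.app (SimplexCategory.mk n) ≫ SS X A εc ed (n+1) (n+1) 0 hn = 𝟙 A
  | 0, hn => by
    rw [SS_succ X A εc ed 0 0 0 hn (by omega), SS_zero' X A εc ed 0 (by omega),
      Category.comp_id]
    exact ed.ε_s'
  | n+1, hn => by
    rw [SS_succ X A εc ed (n+1) (n+1) 0 hn (by omega), ← Category.assoc]
    have he : εc.app (SimplexCategory.mk (n+1)) ≫ ss X A εc ed (n+1)
        = εc.app (SimplexCategory.mk n) := by
      show εc.app _ ≫ ed.s n = _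
      rw [← εc_nat X A εc (SimplexCategory.δ (0 : Fin (n+2))), Category.assoc,
        show X.map (SimplexCategory.δ (0 : Fin (n+2))) ≫ ed.s n = 𝟙 _ from ed.δ₀_s n,
        Category.comp_id]
    rw [he, εc_SS n (by omega)]

/-- the retraction `X ⟶ c(A)` -/
def rr : X ⟶ (Functor.const SimplexCategory).obj A where
  app nn := SS X A εc ed (nn.len + 1) (nn.len + 1) 0 (by omega)
  naturality nn mm φ := by
    have hma := main X A εc ed (a := nn.len) (b := mm.len) (nn.len + mm.len) (le_refl _)
      φ (mm.len + 1) 0 0 (by omega)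
      (by rw [cnt_top _ _ (le_refl _)]; omega)
    simp only [Functor.const_obj_map]
    rw [hma, Bfun_zero, show (𝟙 A : A ⟶ A) = 𝟙 (B X A 0) from rfl,
      SS_congr X A εc ed
        (cnt (@OH nn.len mm.len φ) (mm.len + 1))
        (nn.len + 1) (nn.len + 1) 0 (cnt_top _ _ (le_refl _))
        (by rw [cnt_top _ _ (le_refl _)]; omega) (by omega)]

lemma εc_rr : εc ≫ rr X A εc ed = 𝟙 _ := by
  ext nn
  simp only [NatTrans.comp_app, NatTrans.id_app]
  exact εc_SS X A εc ed nn.len (by omega)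

/-- the elementary homotopies -/
def hmap (n j k : ℕ) (hk : k + j = n + 1) :
    X.obj (SimplexCategory.mk n) ⟶ X.obj (SimplexCategory.mk n) :=
  SS X A εc ed j (n+1) k hk ≫ Bfun X A εc (shiftO j k (n+1) hk)

lemma hmap_congr (n : ℕ) (j j' k k' : ℕ) (e : j = j') (e2 : k = k')
    (hk : k + j = n + 1) (hk' : k' + j' = n + 1) :
    hmap X A εc ed n j k hk = hmap X A εc ed n j' k' hk' := by
  subst e; subst e2; rfl

lemma hmap_natural {a b : ℕ} (φ : ((SimplexCategory.mk a) : SimplexCategory) ⟶ (SimplexCategory.mk b)) (j k k' : ℕ)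
    (hk : k + j = b + 1) (hk' : k' + cnt (OH φ) j = a + 1) :
    hmap X A εc ed a (cnt (OH φ) j) k' hk' ≫ X.map φ
      = X.map φ ≫ hmap X A εc ed b j k hk := by
  simp only [hmap]
  conv_rhs => rw [← Category.assoc, main X A εc ed (a+b) (le_refl _) φ j k k' hk hk',
    Category.assoc, Bfun_comp X A εc _ _]
  conv_lhs => rw [Category.assoc, ← Bfun_OH X A εc φ, Bfun_comp X A εc _ _]
  have he : (OH φ).comp (shiftO (cnt (OH φ) j) k' (a+1) hk')
      = (shiftO j k (b+1) hk).comp (trunc (OH φ) j k' k hk' hk) := by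
    apply ordext
    intro x
    show _ = (shiftO j k (b+1) hk (trunc (OH φ) j k' k hk' hk x)).val
    rw [shiftO_val]
    exact (trunc_val' (OH φ) j k' k hk' hk x).symm
  rw [he]

open Simplicial

/-- underlying order hom of a `1`-simplex -/
def oh {nn : SimplexCategoryᵒᵖ} (α : (Δ[1] : SSet.{0}).obj nn) :
    Fin (nn.unop.len + 1) →o Fin 2 :=
  @OH nn.unop.len 1 (SSet.stdSimplex.objEquiv α)

lemma oh_map {nn mm : SimplexCategoryᵒᵖ} (f : nn ⟶ mm) (α : (Δ[1] : SSet.{0}).obj nn) :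
    oh ((Δ[1] : SSet.{0}).map f α)
      = (oh α).comp (@OH mm.unop.len nn.unop.len f.unop) := by
  show @OH mm.unop.len 1 (SSet.stdSimplex.objEquiv ((Δ[1] : SSet.{0}).map f α)) = _
  rw [SSet.stdSimplex.map_apply, Equiv.apply_symm_apply]
  exact OH_comp (a := mm.unop.len) (b := nn.unop.len) (c := 1) f.unop
    (SSet.stdSimplex.objEquiv α)

lemma oh_const (nn : SimplexCategoryᵒᵖ) (i : Fin 2) (x : Fin (nn.unop.len + 1)) :
    ((oh (SSet.stdSimplex.const 1 i nn)) x).val = i.val :=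
  rfl

/-- the homotopy -/
def Hmap : X ⟶ pow Δ[1] X where
  app nn := Pi.lift (fun α : (Δ[1] : SSet.{0}).obj (op nn) =>
    hmap X A εc ed nn.len (cnt (oh α) 1) (nn.len + 1 - cnt (oh α) 1)
      (Nat.sub_add_cancel (cnt_le _ _)))
  naturality nn mm φ := by
    dsimp only [pow]
    ext α
    simp only [Category.assoc, limit.lift_π, Fan.mk_π_app]
    rw [← Category.assoc, limit.lift_π]
    simp only [Fan.mk_π_app]
    have e1 : cnt (oh ((Δ[1] : SSet.{0}).map φ.op α)) 1
        = cnt (@OH nn.len mm.len φ) (cnt (oh α) 1) := by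
      rw [oh_map φ.op α, cnt_comp]
      rfl
    rw [hmap_congr X A εc ed nn.len (cnt (oh ((Δ[1] : SSet.{0}).map φ.op α)) 1)
      (cnt (@OH nn.len mm.len φ) (cnt (oh α) 1))
      (nn.len + 1 - cnt (oh ((Δ[1] : SSet.{0}).map φ.op α)) 1)
      (nn.len + 1 - cnt (@OH nn.len mm.len φ) (cnt (oh α) 1))
      e1 (by rw [e1]) (Nat.sub_add_cancel (cnt_le _ _)) (Nat.sub_add_cancel (cnt_le _ _))]
    exact (hmap_natural X A εc ed (a := nn.len) (b := mm.len) φ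
      (cnt (oh α) 1) (mm.len + 1 - cnt (oh α) 1) _
      (Nat.sub_add_cancel (cnt_le _ _)) (Nat.sub_add_cancel (cnt_le _ _))).symm

lemma H_ev_app (i : Fin 2) (nn : SimplexCategory) :
    (Hmap X A εc ed ≫ ev i X).app nn
      = hmap X A εc ed nn.len (cnt (oh (SSet.stdSimplex.const 1 i (op nn))) 1)
          (nn.len + 1 - cnt (oh (SSet.stdSimplex.const 1 i (op nn))) 1)
          (Nat.sub_add_cancel (cnt_le _ _)) := by
  show (Hmap X A εc ed).app nn ≫ (ev i X).app nn = _
  exact limit.lift_π _ _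

lemma H_ev1 : Hmap X A εc ed ≫ ev 1 X = 𝟙 X := by
  ext nn
  rw [H_ev_app]
  have e1 : cnt (oh (SSet.stdSimplex.const 1 1 (op nn))) 1 = 0 := by
    apply cnt_eq_of _ _ _ (by omega)
    intro x
    rw [oh_const]
    constructor <;> omega
  rw [hmap_congr X A εc ed nn.len _ 0 _ (nn.len + 1) e1 (by omega) _ (by omega)]
  show SS X A εc ed 0 (nn.len+1) (nn.len+1) _ ≫ Bfun X A εc (shiftO 0 (nn.len+1) (nn.len+1) _)
      = _
  rw [SS_zero' X A εc ed _ _, Category.id_comp,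
    show shiftO 0 (nn.len+1) (nn.len+1) (by omega) = OrderHom.id from
      ordext (fun x => by rw [shiftO_val]; rfl),
    Bfun_id]
  rfl

lemma H_ev0 : Hmap X A εc ed ≫ ev 0 X = rr X A εc ed ≫ εc := by
  ext nn
  rw [H_ev_app]
  have e0 : cnt (oh (SSet.stdSimplex.const 1 0 (op nn))) 1 = nn.len + 1 := by
    apply cnt_eq_of _ _ _ (le_refl _)
    intro x
    rw [oh_const]
    exact ⟨fun _ => x.isLt, fun _ => by omega⟩
  rw [hmap_congr X A εc ed nn.len _ (nn.len + 1) _ 0 e0 (by omega) _ (by omega)]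
  show SS X A εc ed (nn.len+1) (nn.len+1) 0 _ ≫ Bfun X A εc (shiftO (nn.len+1) 0 (nn.len+1) _)
      = _
  rw [show Bfun X A εc (shiftO (nn.len+1) 0 (nn.len+1) (by omega))
      = εc.app (SimplexCategory.mk nn.len) from rfl]
  rfl


end
end ExtraDegAux

/-- if a coaugmentation `ε : c(A) ⟶ X` of a cosimplicial object (in a
category with products) admits an extra degeneracy, then `ε` is a cosimplicial homotopy
equivalence, where cosimplicial homotopies are defined via the path object `X^{Δ[1]}`
(with `(X^K)^n = ∏_{K_n} X^n`). -/
theorem extraDegeneracy_homotopyEquiv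
    (X : CosimplicialObject D) (A : D)
    (εc : (Functor.const SimplexCategory).obj A ⟶ X)
    (ed : CoExtraDegeneracy X A (εc.app (SimplexCategory.mk 0))) :
    ∃ r : X ⟶ (Functor.const SimplexCategory).obj A,
      εc ≫ r = 𝟙 ((Functor.const SimplexCategory).obj A) ∧
      CosimplicialHomotopic (r ≫ εc) (𝟙 X) :=
  ⟨ExtraDegAux.rr X A εc ed, ExtraDegAux.εc_rr X A εc ed,
    ExtraDegAux.Hmap X A εc ed, ExtraDegAux.H_ev0 X A εc ed, ExtraDegAux.H_ev1 X A εc ed⟩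

end
end

section
/- Let (C, S, W) be a category with two saturated classes of morphisms S ⊆ W. If w : M → N is a morphism in W between Cartan-Eilenberg fibrant objects, then w is an isomorphism in C[S⁻¹] (Whitehead's theorem for CE-categories). -/
open CategoryTheory

universe v u

/-- An object `M` is Cartan–Eilenberg fibrant (with respect to strong equivalences `S` and
weak equivalences `W`) if every weak equivalence `w : Y ⟶ X` induces a unique-lifting
property against morphisms `Y ⟶ M` of the localized category `C[S⁻¹]`. -/
def CEFibrant {C : Type u} [Category.{v} C] (S W : MorphismProperty C) (M : C) : Prop :=
  ∀ ⦃Y X : C⦄ (w : Y ⟶ X), W w →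
    ∀ f : S.Q.obj Y ⟶ S.Q.obj M, ∃! g : S.Q.obj X ⟶ S.Q.obj M, S.Q.map w ≫ g = f

/-- Whitehead's theorem for CE-categories: if `S ⊆ W` are saturated classes
and `w : M ⟶ N` is a weak equivalence between CE-fibrant objects, then `w` becomes an
isomorphism in `C[S⁻¹]`. -/
theorem whitehead_CE
    {C : Type u} [Category.{v} C] (S W : MorphismProperty C)
    (hS : ∀ ⦃X Y : C⦄ (f : X ⟶ Y), S f ↔ IsIso (S.Q.map f))
    (hW : ∀ ⦃X Y : C⦄ (f : X ⟶ Y), W f ↔ IsIso (W.Q.map f))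
    (hSW : ∀ ⦃X Y : C⦄ (f : X ⟶ Y), S f → W f)
    {M N : C} (hM : CEFibrant S W M) (hN : CEFibrant S W N)
    (w : M ⟶ N) (hw : W w) :
    IsIso (S.Q.map w) := by
  obtain ⟨g, hg, -⟩ := hM w hw (𝟙 _)
  obtain ⟨g', -, hg'⟩ := hN w hw (S.Q.map w)
  have h1 : g ≫ S.Q.map w = 𝟙 _ := by
    have ha := hg' (g ≫ S.Q.map w) (by simp only [← Category.assoc, hg, Category.id_comp])
    have hb := hg' (𝟙 _) (by simp)
    rw [ha, hb]
  exact ⟨g, hg, h1⟩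
end

section
/- Let (C, S, W) be a right Cartan-Eilenberg category admitting a resolvent functor (R, ρ), i.e. R : C → C with R(X) CE-fibrant for all X and ρ : id → R a natural transformation with ρ_X ∈ W̄. Then: (a) an object X is CE-fibrant if and only if ρ_X is an isomorphism in C[S⁻¹]; (b) a morphism w lies in W̄ if and only if R(w) is an isomorphism in C[S⁻¹]. -/
open CategoryTheory

universe v u

/-- A CE-fibrant object has the unique lifting property not only against `W`, but against
any morphism inverted by `W.Q` (i.e. the saturation `W̄`). -/
lemma CEFibrant.existsUnique_of_isIso {C : Type u} [Category.{v} C]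
    {S W : MorphismProperty C} {M : C} (hM : CEFibrant S W M)
    {X Y : C} (u : X ⟶ Y) (hu : IsIso (W.Q.map u)) :
    ∀ f : S.Q.obj X ⟶ S.Q.obj M, ∃! g : S.Q.obj Y ⟶ S.Q.obj M, S.Q.map u ≫ g = f := by
  -- the functor `Z ↦ Hom(S.Q Z, S.Q M)` (contravariant, written into `Typeᵒᵖ`)
  let F : C ⥤ _ := S.Q ⋙ (yoneda.obj (S.Q.obj M)).rightOp
  have hF : W.IsInvertedBy F := by
    intro A B w hw
    have hbij : Function.Bijective (fun g : S.Q.obj B ⟶ S.Q.obj M => S.Q.map w ≫ g) :=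
      (Function.bijective_iff_existsUnique _).2 (hM w hw)
    have : IsIso ((yoneda.obj (S.Q.obj M)).map (S.Q.map w).op) :=
      (isIso_iff_bijective _).2 hbij
    exact inferInstanceAs (IsIso ((yoneda.obj (S.Q.obj M)).map (S.Q.map w).op).op)
  have key : IsIso (F.map u) := by
    rw [← Localization.Construction.fac F hF]
    exact inferInstanceAs (IsIso ((Localization.Construction.lift F hF).map (W.Q.map u)))
  have : IsIso ((yoneda.obj (S.Q.obj M)).map (S.Q.map u).op) := by
    have : IsIso ((yoneda.obj (S.Q.obj M)).map (S.Q.map u).op).op := key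
    exact isIso_of_op _
  have hbij : Function.Bijective (fun g : S.Q.obj Y ⟶ S.Q.obj M => S.Q.map u ≫ g) :=
    (isIso_iff_bijective _).1 this
  exact (Function.bijective_iff_existsUnique _).1 hbij

/-- A morphism between CE-fibrant objects which is invertible in `C[W⁻¹]` is invertible
in `C[S⁻¹]`. -/
lemma isIso_SQ_map {C : Type u} [Category.{v} C] {S W : MorphismProperty C}
    {A B : C} (hA : CEFibrant S W A) (hB : CEFibrant S W B)
    (u : A ⟶ B) (hu : IsIso (W.Q.map u)) : IsIso (S.Q.map u) := by
  obtain ⟨g, hg, -⟩ := hA.existsUnique_of_isIso u hu (𝟙 _)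
  refine ⟨g, hg, ?_⟩
  obtain ⟨g0, -, huniq⟩ := hB.existsUnique_of_isIso u hu (S.Q.map u)
  have h1 : S.Q.map u ≫ g ≫ S.Q.map u = S.Q.map u := by rw [← Category.assoc, hg, Category.id_comp]
  have h2 : S.Q.map u ≫ 𝟙 _ = S.Q.map u := Category.comp_id _
  exact (huniq _ h1).trans (huniq _ h2).symm

/-- CE-fibrancy is invariant under isomorphism in `C[S⁻¹]`. -/
lemma CEFibrant.of_iso {C : Type u} [Category.{v} C] {S W : MorphismProperty C}
    {M N : C} (hM : CEFibrant S W M) (e : S.Q.obj N ≅ S.Q.obj M) : CEFibrant S W N := by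
  intro Y X w hw f
  obtain ⟨g, hg, huniq⟩ := hM w hw (f ≫ e.hom)
  refine ⟨g ≫ e.inv, ?_, ?_⟩
  · show S.Q.map w ≫ g ≫ e.inv = f
    rw [← Category.assoc, hg, Category.assoc, e.hom_inv_id, Category.comp_id]
  · intro y hy
    replace hy : S.Q.map w ≫ y = f := hy
    have := huniq (y ≫ e.hom) (by show S.Q.map w ≫ y ≫ e.hom = f ≫ e.hom
                                  rw [← Category.assoc, hy])
    rw [← this, Category.assoc, e.hom_inv_id, Category.comp_id]

/-- in a right Cartan–Eilenberg category `(C, S, W)` (with `S ⊆ W̄`,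
expressed by `h : S.IsInvertedBy W.Q`, and every object admitting a CE-fibrant model)
with a resolvent functor `(R, ρ)` (`R X` CE-fibrant for all `X` and `ρ_X ∈ W̄`), we have:
(a) `X` is CE-fibrant iff `ρ_X` is an isomorphism in `C[S⁻¹]`, and
(b) `w ∈ W̄` iff `R(w)` is an isomorphism in `C[S⁻¹]`. -/
theorem resolvent_functor_characterizations
    {C : Type u} [Category.{v} C] (S W : MorphismProperty C)
    (h : S.IsInvertedBy W.Q)
    (hCE : ∀ X : C, ∃ (M : C) (w : S.Q.obj X ⟶ S.Q.obj M),
      CEFibrant S W M ∧ IsIso ((Localization.Construction.lift W.Q h).map w))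
    (R : C ⥤ C) (ρ : 𝟭 C ⟶ R)
    (hfib : ∀ X : C, CEFibrant S W (R.obj X))
    (hρ : ∀ X : C, IsIso (W.Q.map (ρ.app X))) :
    (∀ X : C, CEFibrant S W X ↔ IsIso (S.Q.map (ρ.app X))) ∧
    (∀ ⦃X Y : C⦄ (w : X ⟶ Y), IsIso (W.Q.map w) ↔ IsIso (S.Q.map (R.map w))) := by
  -- `W.Q` factors through `S.Q`
  have hWQ : ∀ {X Y : C} (u : X ⟶ Y), IsIso (S.Q.map u) → IsIso (W.Q.map u) := by
    intro X Y u hu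
    rw [← Localization.Construction.fac W.Q h]
    exact inferInstanceAs (IsIso ((Localization.Construction.lift W.Q h).map (S.Q.map u)))
  constructor
  · intro X
    constructor
    · intro hX
      exact isIso_SQ_map hX (hfib X) (ρ.app X) (hρ X)
    · intro hX
      exact (hfib X).of_iso (asIso (S.Q.map (ρ.app X)))
  · intro X Y w
    have hnat : W.Q.map w ≫ W.Q.map (ρ.app Y) = W.Q.map (ρ.app X) ≫ W.Q.map (R.map w) := by
      rw [← W.Q.map_comp, ← W.Q.map_comp]
      congr 1
      simpa using ρ.naturality w
    constructor
    · intro hw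
      have : IsIso (W.Q.map (R.map w)) := by
        have := hρ X; have := hρ Y
        have : W.Q.map (R.map w) = inv (W.Q.map (ρ.app X)) ≫ W.Q.map w ≫ W.Q.map (ρ.app Y) := by
          rw [hnat]; simp
        rw [this]; infer_instance
      exact isIso_SQ_map (hfib X) (hfib Y) (R.map w) this
    · intro hw
      have hw' : IsIso (W.Q.map (R.map w)) := hWQ _ hw
      have := hρ X; have := hρ Y
      have : W.Q.map w = W.Q.map (ρ.app X) ≫ W.Q.map (R.map w) ≫ inv (W.Q.map (ρ.app Y)) := by
        rw [← Category.assoc, ← hnat]; simp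
      rw [this]; infer_instance
end

section
/- Let (C, S, W) be a right Cartan-Eilenberg category and F : C → D a functor sending every morphism of S to an isomorphism. Then F admits a right derived functor RF : C[W⁻¹] → D (an absolute left Kan extension of the induced functor along the localization C[S⁻¹] → C[W⁻¹]), computable on objects by RF(X) = F(M) where X → M is a CE-fibrant model of X. -/
open CategoryTheory

universe v u v' u' v'' u''

namespace CEDerivedAux

open CategoryTheory.Limits

section Kan

variable {C₁ : Type*} [Category C₁] {C₂ : Type*} [Category C₂] {H : Type*} [Category H]
  {L : C₁ ⥤ C₂} {R : C₂ ⥤ C₁} (adj : L ⊣ R) (F : C₁ ⥤ H)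

/-- descent data for the Kan extension property of `R ⋙ F`. -/
@[simps]
def descNT (G : Functor.LeftExtension L F) : NatTrans (R ⋙ F) G.right where
  app X := G.hom.app (R.obj X) ≫ G.right.map (adj.counit.app X)
  naturality X Y u := by
    have hnat := G.hom.naturality (R.map u)
    have hcu := adj.counit.naturality u
    dsimp at hnat hcu ⊢
    rw [← Category.assoc, hnat, Category.assoc, ← G.right.map_comp, hcu,
      G.right.map_comp, ← Category.assoc]

lemma isLKE_of_adjunction (α : F ⟶ L ⋙ R ⋙ F)
    (hα : ∀ A, α.app A = F.map (adj.unit.app A)) :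
    (R ⋙ F).IsLeftKanExtension α := by
  refine ⟨⟨IsInitial.ofUniqueHom (fun G => StructuredArrow.homMk (descNT adj F G) ?_)
    (fun G m => ?_)⟩⟩
  · ext A
    have hnat := G.hom.naturality (adj.unit.app A)
    show α.app A ≫ (G.hom.app (R.obj (L.obj A)) ≫ G.right.map (adj.counit.app (L.obj A))) =
      G.hom.app A
    dsimp at hnat ⊢
    rw [hα, ← Category.assoc, hnat, Category.assoc, ← G.right.map_comp,
      adj.left_triangle_components, G.right.map_id, Category.comp_id]
  · have hw : ∀ A : C₁, α.app A ≫ m.right.app (L.obj A) = G.hom.app A := by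
      intro A
      have h0 := congr_arg (fun (τ : F ⟶ L ⋙ G.right) => τ.app A) (StructuredArrow.w m)
      dsimp at h0
      exact h0
    change ({ left := ⟨⟨⟩⟩, right := R ⋙ F, hom := α } : Functor.LeftExtension L F) ⟶ G at m
    ext X
    have h1 : F.map (adj.unit.app (R.obj X)) ≫ F.map (R.map (adj.counit.app X)) =
        𝟙 (F.obj (R.obj X)) := by
      simp [← F.map_comp]
    have hnat := m.right.naturality (adj.counit.app X)
    dsimp at hnat ⊢
    calc m.right.app X
        = (F.map (adj.unit.app (R.obj X)) ≫ F.map (R.map (adj.counit.app X))) ≫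
            m.right.app X := by rw [h1]; simp
      _ = F.map (adj.unit.app (R.obj X)) ≫ F.map (R.map (adj.counit.app X)) ≫
            m.right.app X := by rw [Category.assoc]
      _ = F.map (adj.unit.app (R.obj X)) ≫ m.right.app (L.obj (R.obj X)) ≫
            G.right.map (adj.counit.app X) := by rw [hnat]
      _ = (α.app (R.obj X) ≫ m.right.app (L.obj (R.obj X))) ≫
            G.right.map (adj.counit.app X) := by rw [hα, Category.assoc]
      _ = G.hom.app (R.obj X) ≫ G.right.map (adj.counit.app X) := by rw [hw]

end Kan

section Loc

variable {C : Type u} [Category.{v} C] (S W : MorphismProperty C)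

/-- The contravariant hom functor into a fixed object, valued in `(Type _)ᵒᵖ`. -/
@[simps]
def homInto {C' : Type u'} [Category.{v'} C'] (M : C') : C' ⥤ (Type v')ᵒᵖ where
  obj A := Opposite.op (A ⟶ M)
  map f := Quiver.Hom.op (TypeCat.ofHom (fun g => f ≫ g))
  map_id A := by
    apply Quiver.Hom.unop_inj; ext g; simp
  map_comp f f' := by
    apply Quiver.Hom.unop_inj; ext g; simp

variable {S W}

lemma invertedH {M : C} (hM : CEFibrant S W M) :
    W.IsInvertedBy (S.Q ⋙ homInto (S.Q.obj M)) := by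
  intro Y X w hw
  refine ⟨Quiver.Hom.op (TypeCat.ofHom (fun f => (hM w hw f).choose)), ?_, ?_⟩
  · apply Quiver.Hom.unop_inj
    ext f
    show S.Q.map w ≫ (hM w hw f).choose = f
    exact (hM w hw f).choose_spec.1
  · apply Quiver.Hom.unop_inj
    ext g
    show (hM w hw (S.Q.map w ≫ g)).choose = g
    exact ((hM w hw (S.Q.map w ≫ g)).choose_spec.2 g rfl).symm

variable (h : S.IsInvertedBy W.Q)

/-- The descended hom-presheaf of a CE-fibrant object. -/
noncomputable def Hloc {M : C} (hM : CEFibrant S W M) :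
    W.Localization ⥤ (Type (max u v))ᵒᵖ :=
  Localization.Construction.lift (S.Q ⋙ homInto (S.Q.obj M)) (invertedH hM)

lemma facH {M : C} (hM : CEFibrant S W M) :
    W.Q ⋙ Hloc hM = S.Q ⋙ homInto (S.Q.obj M) :=
  Localization.Construction.fac _ _

lemma facL : S.Q ⋙ Localization.Construction.lift W.Q h = W.Q :=
  Localization.Construction.fac _ _

lemma LcompH {M : C} (hM : CEFibrant S W M) :
    Localization.Construction.lift W.Q h ⋙ Hloc hM = homInto (S.Q.obj M) :=
  Localization.Construction.uniq _ _
    (by rw [← Functor.assoc, facL, facH])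

lemma Hloc_map_L {M : C} (hM : CEFibrant S W M) {A B : S.Localization} (f : A ⟶ B) :
    (Hloc hM).map ((Localization.Construction.lift W.Q h).map f) =
      (homInto (S.Q.obj M)).map f := by
  have := Functor.congr_hom (LcompH h hM) f
  refine this.trans ?_; erw [eqToHom_refl, eqToHom_refl, Category.id_comp, Category.comp_id]

lemma Lmap_Q {X Y : C} (u : X ⟶ Y) :
    (Localization.Construction.lift W.Q h).map (S.Q.map u) = W.Q.map u := by
  have := Functor.congr_hom (facL h) u
  refine this.trans ?_; erw [eqToHom_refl, eqToHom_refl, Category.id_comp, Category.comp_id]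

/-- The comparison natural transformation. -/
noncomputable def sigmaNT {M : C} (hM : CEFibrant S W M) :
    homInto ((Localization.Construction.lift W.Q h).obj (S.Q.obj M)) ⟶ Hloc hM :=
  Localization.Construction.natTransExtension
    { app := fun X => Quiver.Hom.op (TypeCat.ofHom
        (fun f : S.Q.obj X ⟶ S.Q.obj M => (Localization.Construction.lift W.Q h).map f))
      naturality := fun X Y u => by
        apply Quiver.Hom.unop_inj
        ext f
        have hmap : (Hloc hM).map (W.Q.map u) =
            (homInto (S.Q.obj M)).map (S.Q.map u) := by
          have := Functor.congr_hom (facH hM) u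
          refine this.trans ?_; erw [eqToHom_refl, eqToHom_refl, Category.id_comp, Category.comp_id]
          rfl
        show W.Q.map u ≫ (Localization.Construction.lift W.Q h).map f =
          (Localization.Construction.lift W.Q h).map
            (((Hloc hM).map (W.Q.map u)).unop f)
        rw [hmap]
        show W.Q.map u ≫ (Localization.Construction.lift W.Q h).map f =
          (Localization.Construction.lift W.Q h).map (S.Q.map u ≫ f)
        have key : ∀ f' : S.Q.obj Y ⟶ S.Q.obj M, W.Q.map u ≫
            (Localization.Construction.lift W.Q h).map f' =
            (Localization.Construction.lift W.Q h).map (S.Q.map u ≫ f') := fun f' => by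
          rw [Functor.map_comp, Lmap_Q]; exact rfl
        exact key f }

lemma sigmaNT_app {M : C} (hM : CEFibrant S W M) (X : C) :
    (sigmaNT h hM).app (W.Q.obj X) = Quiver.Hom.op (TypeCat.ofHom
      (fun f : S.Q.obj X ⟶ S.Q.obj M =>
        (Localization.Construction.lift W.Q h).map f)) := by
  apply Localization.Construction.NatTransExtension.app_eq

lemma bijective_Lmap {M : C} (hM : CEFibrant S W M) (A : S.Localization) :
    Function.Bijective (fun f : A ⟶ S.Q.obj M =>
      (Localization.Construction.lift W.Q h).map f) := by
  set L := Localization.Construction.lift W.Q h with hL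
  constructor
  · intro f₁ f₂ hf
    have := congrArg (Hloc hM).map hf
    rw [Hloc_map_L h hM f₁, Hloc_map_L h hM f₂] at this
    have := types_congr_hom (congrArg Quiver.Hom.unop this) (𝟙 (S.Q.obj M))
    have h2 : f₁ ≫ 𝟙 _ = f₂ ≫ 𝟙 _ := this
    simpa using h2
  · intro g
    obtain ⟨⟨X₀⟩⟩ := A
    refine ⟨((Hloc hM).map g).unop (𝟙 (S.Q.obj M)), ?_⟩
    have nat := (sigmaNT h hM).naturality g
    have e2 := types_congr_hom (congrArg Quiver.Hom.unop nat) (𝟙 (S.Q.obj M))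
    have ha : ((sigmaNT h hM).app (W.Q.obj X₀)).unop
        (((Hloc hM).map g).unop (𝟙 (S.Q.obj M))) =
        (Localization.Construction.lift W.Q h).map
          (((Hloc hM).map g).unop (𝟙 (S.Q.obj M))) := by
      rw [sigmaNT_app h hM X₀]
      rfl
    have hb : ((sigmaNT h hM).app (W.Q.obj M)).unop (𝟙 (S.Q.obj M)) =
        (Localization.Construction.lift W.Q h).map (𝟙 (S.Q.obj M)) := by
      rw [sigmaNT_app h hM M]
      rfl
    have e3 : ((homInto ((Localization.Construction.lift W.Q h).obj
            (S.Q.obj M))).map g).unop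
          (((sigmaNT h hM).app (W.Q.obj M)).unop (𝟙 (S.Q.obj M))) =
        ((sigmaNT h hM).app (W.Q.obj X₀)).unop
          (((Hloc hM).map g).unop (𝟙 (S.Q.obj M))) := e2
    rw [ha, hb] at e3
    show (Localization.Construction.lift W.Q h).map
      (((Hloc hM).map g).unop (𝟙 (S.Q.obj M))) = g
    rw [← e3]
    show g ≫ (Localization.Construction.lift W.Q h).map (𝟙 (S.Q.obj M)) = g
    rw [(Localization.Construction.lift W.Q h).map_id, Category.comp_id]

end Loc

end CEDerivedAux

open CEDerivedAux in
/-- in a right Cartan–Eilenberg category `(C, S, W)`, any functor `F : C ⥤ D`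
inverting the strong equivalences `S` admits a right derived functor
`RF : C[W⁻¹] ⥤ D`, namely an absolute left Kan extension of the induced functor
`F' : C[S⁻¹] ⥤ D` along the canonical functor `L : C[S⁻¹] ⥤ C[W⁻¹]`, whose value on an
object `X` is (isomorphic to) `F(M)` for any CE-fibrant model `X ⟶ M`. -/
theorem derived_functor_exists_CE
    {C : Type u} [Category.{v} C] (S W : MorphismProperty C)
    (h : S.IsInvertedBy W.Q)
    (hCE : ∀ X : C, ∃ (M : C) (w : S.Q.obj X ⟶ S.Q.obj M),
      CEFibrant S W M ∧ IsIso ((Localization.Construction.lift W.Q h).map w))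
    {D : Type u'} [Category.{v'} D] (F : C ⥤ D) (hF : S.IsInvertedBy F) :
    ∃ (RF : W.Localization ⥤ D)
      (α : Localization.Construction.lift F hF ⟶ Localization.Construction.lift W.Q h ⋙ RF),
      RF.IsLeftKanExtension α ∧
      (∀ {E : Type u''} [Category.{v''} E] (G : D ⥤ E),
        (RF ⋙ G).IsLeftKanExtension
          (CategoryTheory.Functor.whiskerRight α G ≫
            (Functor.associator (Localization.Construction.lift W.Q h) RF G).hom)) ∧
      (∀ (X M : C) (w : S.Q.obj X ⟶ S.Q.obj M), CEFibrant S W M →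
        IsIso ((Localization.Construction.lift W.Q h).map w) →
        Nonempty (RF.obj (W.Q.obj X) ≅ F.obj M)) := by
  classical
  choose Mod wMod hMod hwMod using hCE
  set L := Localization.Construction.lift W.Q h with hLdef
  set F' := Localization.Construction.lift F hF with hF'def
  -- the hom-equivalence for the right adjoint
  let bij : ∀ (X₀ : C) (A : S.Localization),
      (A ⟶ S.Q.obj (Mod X₀)) ≃ (L.obj A ⟶ L.obj (S.Q.obj (Mod X₀))) :=
    fun X₀ A => Equiv.ofBijective _ (bijective_Lmap h (hMod X₀) A)
  let cIso : ∀ (X : W.Localization), L.obj (S.Q.obj (Mod X.as.obj)) ≅ X :=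
    fun X => (asIso (L.map (wMod X.as.obj))).symm
  let e : ∀ (A : S.Localization) (X : W.Localization),
      (L.obj A ⟶ X) ≃ (A ⟶ S.Q.obj (Mod X.as.obj)) :=
    fun A X =>
      (⟨fun g => g ≫ (cIso X).inv, fun g => g ≫ (cIso X).hom,
        fun g => by simp, fun g => by simp⟩ :
          (L.obj A ⟶ X) ≃ (L.obj A ⟶ L.obj (S.Q.obj (Mod X.as.obj)))).trans
        (bij X.as.obj A).symm
  have hLe : ∀ (A : S.Localization) (X : W.Localization) (g : L.obj A ⟶ X),
      L.map (e A X g) = g ≫ (cIso X).inv :=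
    fun A X g => (bij X.as.obj A).apply_symm_apply (g ≫ (cIso X).inv)
  have he : ∀ (A' A : S.Localization) (X : W.Localization)
      (f : A' ⟶ A) (g : L.obj A ⟶ X),
      e A' X (L.map f ≫ g) = f ≫ e A X g := by
    intro A' A X f g
    apply (bij X.as.obj A').injective
    show L.map (e A' X (L.map f ≫ g)) = L.map (f ≫ e A X g)
    rw [hLe, L.map_comp, hLe, Category.assoc]
  let R : W.Localization ⥤ S.Localization := Adjunction.rightAdjointOfEquiv e he
  let adj : L ⊣ R := Adjunction.adjunctionOfEquivRight e he
  let RF : W.Localization ⥤ D := R ⋙ F'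
  let α : F' ⟶ L ⋙ RF :=
    { app := fun A => F'.map (adj.unit.app A)
      naturality := fun A B f => by
        have hnat := adj.unit.naturality f
        dsimp at hnat
        show F'.map f ≫ F'.map (adj.unit.app B) =
          F'.map (adj.unit.app A) ≫ F'.map (R.map (L.map f))
        rw [← F'.map_comp, ← F'.map_comp, hnat] }
  refine ⟨RF, α, ?_, ?_, ?_⟩
  · exact isLKE_of_adjunction adj F' α (fun A => rfl)
  · intro E _ G
    exact isLKE_of_adjunction adj (F' ⋙ G) _ (fun A => by simp [α])
  · intro X M₁ w₁ hM₁ hw₁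
    -- RF.obj (W.Q.obj X) is F.obj (Mod X); compare the two fibrant models
    have hRF : RF.obj (W.Q.obj X) = F.obj (Mod X) := rfl
    have := hwMod X
    let θ : L.obj (S.Q.obj (Mod X)) ≅ L.obj (S.Q.obj M₁) :=
      (asIso (L.map (wMod X))).symm ≪≫ asIso (L.map w₁)
    obtain ⟨f, hf⟩ := (bijective_Lmap h hM₁ (S.Q.obj (Mod X))).2 θ.hom
    obtain ⟨g, hg⟩ := (bijective_Lmap h (hMod X) (S.Q.obj M₁)).2 θ.inv
    have hf' : L.map f = θ.hom := hf
    have hg' : L.map g = θ.inv := hg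
    have hfg : f ≫ g = 𝟙 _ := by
      apply (bijective_Lmap h (hMod X) (S.Q.obj (Mod X))).1
      show L.map (f ≫ g) = L.map (𝟙 (S.Q.obj (Mod X)))
      rw [L.map_comp, L.map_id, hf', hg', θ.hom_inv_id]
    have hgf : g ≫ f = 𝟙 _ := by
      apply (bijective_Lmap h hM₁ (S.Q.obj M₁)).1
      show L.map (g ≫ f) = L.map (𝟙 (S.Q.obj M₁))
      rw [L.map_comp, L.map_id, hg', hf', θ.inv_hom_id]
    refine ⟨?_⟩
    rw [hRF]
    have e1 : F.obj (Mod X) = F'.obj (S.Q.obj (Mod X)) := rfl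
    have e2 : F.obj M₁ = F'.obj (S.Q.obj M₁) := rfl
    rw [e1, e2]
    exact ⟨F'.map f, F'.map g, by rw [← F'.map_comp, hfg, F'.map_id],
      by rw [← F'.map_comp, hgf, F'.map_id]⟩
end

section
/- Let R : C → C be a functor with natural transformations ρ : id → R and σ : R² → R satisfying σ ∘ ρ_R = id (ρ_R denotes ρ at R(X)), and suppose R sends a class W of morphisms into a class S of isomorphisms after localization, with ρ_{R(X)} an isomorphism in C[S⁻¹] for all X. Then every object of the form R(F) has the unique right lifting property in C[S⁻¹] against all morphisms of W: given w : G → G' in W and f : G → R(F) in C[S⁻¹], the morphism g = σ_F ∘ R(f) ∘ R(w)⁻¹ ∘ ρ_{G'} is the unique morphism with g ∘ w = f in C[S⁻¹]. -/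
open CategoryTheory

universe v u

/-- abstract unique-lifting for objects of the form `R(F)`. Work in the
localized category `C[S⁻¹]` (where the endofunctor `R` lives, since `R(S) ⊆ S`).
Given `ρ : id → R` and `σ : R² → R` with `σ ∘ ρ_R = id`, such that `R` sends each
`w ∈ W` to an isomorphism of `C[S⁻¹]` and `ρ_{R(X)}` is an isomorphism for all `X`,
every lifting problem given by `w : G ⟶ G'` in `W` and `f : G ⟶ R(F)` in `C[S⁻¹]` has
`g = σ_F ∘ R(f) ∘ R(w)⁻¹ ∘ ρ_{G'}` as its unique solution. -/
theorem unique_lifting_for_R_objects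
    {C : Type u} [Category.{v} C] (S W : MorphismProperty C)
    (R : S.Localization ⥤ S.Localization)
    (ρ : 𝟭 S.Localization ⟶ R) (σ : R ⋙ R ⟶ R)
    (hσρ : ∀ X : S.Localization, ρ.app (R.obj X) ≫ σ.app X = 𝟙 (R.obj X))
    (hRW : ∀ ⦃X Y : C⦄ (w : X ⟶ Y), W w → IsIso (R.map (S.Q.map w)))
    (hρR : ∀ X : S.Localization, IsIso (ρ.app (R.obj X)))
    {G G' : C} (w : G ⟶ G') (hw : W w) (F : C)
    (f : S.Q.obj G ⟶ R.obj (S.Q.obj F)) :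
    (S.Q.map w ≫
        (ρ.app (S.Q.obj G') ≫ (@inv _ _ _ _ (R.map (S.Q.map w)) (hRW w hw)) ≫ R.map f ≫ σ.app (S.Q.obj F)) = f) ∧
    (∀ g' : S.Q.obj G' ⟶ R.obj (S.Q.obj F), S.Q.map w ≫ g' = f →
      g' = ρ.app (S.Q.obj G') ≫ (@inv _ _ _ _ (R.map (S.Q.map w)) (hRW w hw)) ≫ R.map f ≫ σ.app (S.Q.obj F)) := by
  haveI := hRW w hw
  have hn : ∀ {X Y : S.Localization} (u : X ⟶ Y), u ≫ ρ.app Y = ρ.app X ≫ R.map u := by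
    intro X Y u; simpa using ρ.naturality u
  constructor
  · rw [← Category.assoc, hn (S.Q.map w), Category.assoc, IsIso.hom_inv_id_assoc,
      ← Category.assoc, ← hn f, Category.assoc, hσρ, Category.comp_id]
  · intro g' hg'
    have hRf : R.map f = R.map (S.Q.map w) ≫ R.map g' := by rw [← R.map_comp, hg']
    rw [hRf]
    simp only [Category.assoc, IsIso.inv_hom_id_assoc]
    rw [← Category.assoc, ← hn g', Category.assoc, hσρ, Category.comp_id]
end
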